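/- Let X ⊂ ℝⁿ be compact, let (x_k)_{k∈ℕ} ⊂ X with |x_{k+1} − x_k| → 0, and let f : ℝⁿ → ℝ be L-Lipschitz on X for some L > 0. Let y ∈ ℝ, θ₀ ∈ (0,1), ε > 0, ς > 0, and define Φ(x) := sgn(f(x) − y)·|f(x) − y|^{1−θ₀}. Assume: (i) the sequence (x_k) has a cluster point x* with f(x*) = y; and (ii) the band criterion holds: for every δ > 0 there exists K ∈ ℕ such that for all k₁, k₂ with K ≤ k₁ < k₂ and x_m ∈ X with |f(x_m) − y| ≤ 2ε for every m ∈ {k₁, …, k₂}, one has diam(x_{⟦k₁,k₂⟧}) + ς(Φ(x_{k₂}) − Φ(x_{k₁})) ≤ δ. Then the sequence (x_k)_{k∈ℕ} converges. -/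

import Mathlib

open Filter

set_option maxHeartbeats 1000000 in
/-- If a sequence with vanishing increments in a compact set has a
cluster point on the level set `{f = y}` and satisfies the band diameter criterion with
the desingularized potential `Φ`, then it converges. -/
theorem band_criterion_convergence {n : ℕ}
    (X : Set (EuclideanSpace ℝ (Fin n))) (hX : IsCompact X)
    (x : ℕ → EuclideanSpace ℝ (Fin n)) (hx : ∀ k, x k ∈ X)
    (hstep : Tendsto (fun k => ‖x (k + 1) - x k‖) atTop (nhds 0))
    (f : EuclideanSpace ℝ (Fin n) → ℝ) (L : ℝ) (hL : 0 < L)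
    (hf : ∀ a ∈ X, ∀ b ∈ X, |f a - f b| ≤ L * ‖a - b‖)
    (y θ₀ ε ς : ℝ) (hθ₀ : θ₀ ∈ Set.Ioo (0 : ℝ) 1) (hε : 0 < ε) (hς : 0 < ς)
    (Φ : EuclideanSpace ℝ (Fin n) → ℝ)
    (hΦ : ∀ z, Φ z = Real.sign (f z - y) * |f z - y| ^ (1 - θ₀))
    (hcluster : ∃ xstar, MapClusterPt xstar atTop x ∧ f xstar = y)
    (hband : ∀ δ > (0 : ℝ), ∃ K : ℕ, ∀ k₁ k₂ : ℕ, K ≤ k₁ → k₁ < k₂ →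
      (∀ m, k₁ ≤ m → m ≤ k₂ → |f (x m) - y| ≤ 2 * ε) →
      Metric.diam (x '' Set.Icc k₁ k₂) + ς * (Φ (x k₂) - Φ (x k₁)) ≤ δ) :
    ∃ p, Tendsto x atTop (nhds p) := by
  classical
  obtain ⟨hθ₀0, hθ₀1⟩ := hθ₀
  obtain ⟨xstar, hcl, hfy⟩ := hcluster
  set e : ℝ := 1 - θ₀ with he_def
  have he : 0 < e := by rw [he_def]; linarith
  set u : ℕ → ℝ := fun k => f (x k) - y with hu
  clear_value u
  have hud : ∀ k, f (x k) - y = u k := fun k => by simp only [hu]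
  -- frequently near the cluster point
  have hfreq : ∀ s ∈ nhds xstar, ∃ᶠ k in atTop, x k ∈ s := fun s hs =>
    (mapClusterPt_iff_frequently.mp hcl) s hs
  have hxstar : xstar ∈ X := by
    have h1 : xstar ∈ closure X := by
      rw [mem_closure_iff_nhds]
      intro U hU
      obtain ⟨k, hk⟩ := (hfreq U hU).exists
      exact ⟨x k, hk, hx k⟩
    rwa [hX.isClosed.closure_eq] at h1
  -- basic Φ estimates
  have hΦpos_le : ∀ k l, 0 < u k → u k ≤ l → Φ (x k) ≤ l ^ e := by
    intro k l h0 hl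
    rw [hΦ, hud k, Real.sign_of_pos h0, one_mul, abs_of_pos h0]
    exact Real.rpow_le_rpow h0.le hl he.le
  have hΦpos_ge : ∀ k l, 0 < l → l ≤ u k → l ^ e ≤ Φ (x k) := by
    intro k l h0 hl
    have h0' : 0 < u k := lt_of_lt_of_le h0 hl
    rw [hΦ, hud k, Real.sign_of_pos h0', one_mul, abs_of_pos h0']
    exact Real.rpow_le_rpow h0.le hl he.le
  have hΦneg_le : ∀ k l, 0 < l → u k ≤ -l → Φ (x k) ≤ -(l ^ e) := by
    intro k l h0 hl
    have h0' : u k < 0 := lt_of_le_of_lt hl (by linarith)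
    rw [hΦ, hud k, Real.sign_of_neg h0', neg_one_mul, abs_of_neg h0']
    exact neg_le_neg (Real.rpow_le_rpow h0.le (by linarith) he.le)
  have hΦneg_ge : ∀ k l, u k < 0 → -l ≤ u k → -(l ^ e) ≤ Φ (x k) := by
    intro k l h0 hl
    rw [hΦ, hud k, Real.sign_of_neg h0, neg_one_mul, abs_of_neg h0]
    exact neg_le_neg (Real.rpow_le_rpow (by linarith) (by linarith) he.le)
  have hΦabs : ∀ k, |Φ (x k)| ≤ |u k| ^ e := by
    intro k
    rw [hΦ, hud k, abs_mul]
    have hs : |Real.sign (u k)| ≤ 1 := by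
      rcases lt_trichotomy (u k) 0 with h | h | h
      · rw [Real.sign_of_neg h]; norm_num
      · rw [h, Real.sign_zero]; norm_num
      · rw [Real.sign_of_pos h]; norm_num
    have h2 : |(|u k| ^ e)| = |u k| ^ e := abs_of_nonneg (Real.rpow_nonneg (abs_nonneg _) _)
    rw [h2]
    calc |Real.sign (u k)| * (|u k| ^ e) ≤ 1 * (|u k| ^ e) :=
          mul_le_mul_of_nonneg_right hs (Real.rpow_nonneg (abs_nonneg _) _)
      _ = |u k| ^ e := one_mul _
  -- the target
  refine ⟨xstar, Metric.tendsto_atTop.mpr ?_⟩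
  intro ρ hρ
  -- constants
  have hc₂ : 0 < (3 * ε / 2) ^ e - (11 * ε / 8) ^ e :=
    sub_pos.mpr (Real.rpow_lt_rpow (by positivity) (by linarith) he)
  set δ : ℝ := min (ρ / 4) (ς * ((3 * ε / 2) ^ e - (11 * ε / 8) ^ e) / 2) with hδ_def
  have hδ : 0 < δ := lt_min (by linarith) (by positivity)
  obtain ⟨K, hK⟩ := hband δ hδ
  -- small steps
  obtain ⟨N₁, hN₁⟩ := Metric.tendsto_atTop.mp hstep (ε / (4 * L)) (by positivity)
  have hstep4 : ∀ k, N₁ ≤ k → |u (k + 1) - u k| ≤ ε / 4 := by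
    intro k hk
    have h1 := hN₁ k hk
    rw [Real.dist_eq, sub_zero, abs_of_nonneg (norm_nonneg _)] at h1
    have h2 : |f (x (k + 1)) - f (x k)| ≤ L * ‖x (k + 1) - x k‖ := hf _ (hx _) _ (hx _)
    have h3 : u (k + 1) - u k = f (x (k + 1)) - f (x k) := by
      rw [← hud (k + 1), ← hud k]; ring
    have h4 : L * ‖x (k + 1) - x k‖ ≤ L * (ε / (4 * L)) :=
      mul_le_mul_of_nonneg_left h1.le hL.le
    have h5 : L * (ε / (4 * L)) = ε / 4 := by field_simp
    rw [h3]; linarith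
  set M : ℕ := max K N₁ with hM_def
  have hMK : K ≤ M := le_max_left _ _
  have hMN₁ : N₁ ≤ M := le_max_right _ _
  -- radius for returns
  set B : ℝ := min ε ((ρ / (8 * ς)) ^ e⁻¹) with hB_def
  have hB : 0 < B := lt_min hε (Real.rpow_pos_of_pos (by positivity) _)
  set η : ℝ := min (ρ / 4) (B / L) with hη_def
  have hη : 0 < η := lt_min (by linarith) (by positivity)
  have hηρ : η ≤ ρ / 4 := min_le_left _ _
  have hLη : L * η ≤ B := by
    have h1 : η ≤ B / L := min_le_right _ _
    rw [le_div_iff₀ hL] at h1; linarith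
  have hLηε : L * η ≤ ε := le_trans hLη (min_le_left _ _)
  have hLηρ : (L * η) ^ e ≤ ρ / (8 * ς) := by
    have h1 : (L * η) ^ e ≤ ((ρ / (8 * ς)) ^ e⁻¹) ^ e :=
      Real.rpow_le_rpow (by positivity) (le_trans hLη (min_le_right _ _)) he.le
    have h2 : ((ρ / (8 * ς)) ^ e⁻¹) ^ e = ρ / (8 * ς) := by
      rw [← Real.rpow_mul (by positivity), inv_mul_cancel₀ (ne_of_gt he), Real.rpow_one]
    linarith
  -- returns
  have hret : ∀ N : ℕ, ∃ t, N ≤ t ∧ dist (x t) xstar ≤ η := by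
    intro N
    have h1 := (hfreq (Metric.ball xstar η) (Metric.ball_mem_nhds _ hη)).and_eventually
      (eventually_ge_atTop N)
    obtain ⟨t, ht1, ht2⟩ := h1.exists
    exact ⟨t, ht2, (Metric.mem_ball.mp ht1).le⟩
  have hretu : ∀ t, dist (x t) xstar ≤ η → |u t| ≤ L * η := by
    intro t ht
    have h1 : |f (x t) - f xstar| ≤ L * ‖x t - xstar‖ := hf _ (hx t) _ hxstar
    have h2 : u t = f (x t) - f xstar := by rw [← hud t, hfy]
    have h3 : L * ‖x t - xstar‖ ≤ L * η := by
      rw [← dist_eq_norm]; exact mul_le_mul_of_nonneg_left ht hL.le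
    rw [h2]; linarith
  have hretΦ : ∀ t, dist (x t) xstar ≤ η → |Φ (x t)| ≤ ρ / (8 * ς) := by
    intro t ht
    have h1 := hΦabs t
    have h2 : |u t| ^ e ≤ (L * η) ^ e :=
      Real.rpow_le_rpow (abs_nonneg _) (hretu t ht) he.le
    linarith
  -- band-pair estimate
  have hA : ∀ a b : ℕ, M ≤ a → a < b → (∀ m, a ≤ m → m ≤ b → |u m| ≤ 2 * ε) →
      ς * (Φ (x b) - Φ (x a)) ≤ δ := by
    intro a b ha hab hb
    have h1 := hK a b (le_trans hMK ha) hab (fun m hm1 hm2 => by rw [hud m]; exact hb m hm1 hm2)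
    have h2 : (0 : ℝ) ≤ Metric.diam (x '' Set.Icc a b) := Metric.diam_nonneg
    linarith
  have hδc₂ : δ ≤ ς * ((3 * ε / 2) ^ e - (11 * ε / 8) ^ e) / 2 := min_le_right _ _
  have hςc₂ : 0 < ς * ((3 * ε / 2) ^ e - (11 * ε / 8) ^ e) := mul_pos hς hc₂
  -- upcrossing through the positive band is impossible
  have lemX : ∀ a b : ℕ, M ≤ a → a ≤ b → u a ≤ 9 * ε / 8 → 7 * ε / 4 < u b → False := by
    intro a b hMa hab hua hub
    obtain ⟨r, har, hur, hrb, hgt⟩ : ∃ r, a ≤ r ∧ u r ≤ 9 * ε / 8 ∧ r ≤ b ∧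
        ∀ m, r < m → m ≤ b → 9 * ε / 8 < u m := by
      refine ⟨Nat.findGreatest (fun m => a ≤ m ∧ u m ≤ 9 * ε / 8) b,
        (Nat.findGreatest_spec (P := fun m => a ≤ m ∧ u m ≤ 9 * ε / 8) hab
          ⟨le_refl a, hua⟩).1,
        (Nat.findGreatest_spec (P := fun m => a ≤ m ∧ u m ≤ 9 * ε / 8) hab
          ⟨le_refl a, hua⟩).2,
        Nat.findGreatest_le b, ?_⟩
      intro m h1 h2
      by_contra h3
      exact Nat.findGreatest_is_greatest h1 h2
        ⟨le_trans (Nat.findGreatest_spec (P := fun m => a ≤ m ∧ u m ≤ 9 * ε / 8) hab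
          ⟨le_refl a, hua⟩).1 h1.le, by linarith⟩
    have hrltb : r < b :=
      lt_of_le_of_ne hrb (fun hrb2 => by rw [hrb2] at hur; linarith)
    have hstepr : |u (r + 1) - u r| ≤ ε / 4 :=
      hstep4 r (le_trans hMN₁ (le_trans hMa har))
    have hur1 : u (r + 1) ≤ 11 * ε / 8 := by
      have := abs_le.mp hstepr; linarith
    have hQex : ∃ m, r < m ∧ 7 * ε / 4 < u m := ⟨b, hrltb, hub⟩
    obtain ⟨w, hQw1, hQw2, hwb, hwmin⟩ : ∃ w, r < w ∧ 7 * ε / 4 < u w ∧ w ≤ b ∧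
        ∀ m, r < m → 7 * ε / 4 < u m → w ≤ m :=
      ⟨Nat.find hQex, (Nat.find_spec hQex).1, (Nat.find_spec hQex).2,
        Nat.find_min' hQex ⟨hrltb, hub⟩, fun m h1 h2 => Nat.find_min' hQex ⟨h1, h2⟩⟩
    have hwne : r + 1 < w := by
      rcases lt_or_ge (r + 1) w with h | h
      · exact h
      · exfalso
        have hw1 : w = r + 1 := le_antisymm h hQw1
        rw [hw1] at hQw2
        linarith
    have hb'w : w - 1 + 1 = w := by omega
    have hrb' : r + 1 ≤ w - 1 := by omega
    have hb'b : w - 1 ≤ b := by omega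
    have hmid : ∀ m, r < m → m ≤ w - 1 → u m ≤ 7 * ε / 4 := by
      intro m h1 h2
      by_contra h3
      push_neg at h3
      have : w ≤ m := hwmin m h1 h3
      omega
    have hstepb' : |u (w - 1 + 1) - u (w - 1)| ≤ ε / 4 :=
      hstep4 (w - 1) (by have := le_trans hMN₁ (le_trans hMa har); omega)
    rw [hb'w] at hstepb'
    have hub' : 3 * ε / 2 < u (w - 1) := by
      have := abs_le.mp hstepb'
      linarith
    have hbandmid : ∀ m, r + 1 ≤ m → m ≤ w - 1 → |u m| ≤ 2 * ε := by
      intro m h1 h2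
      have h3 : 9 * ε / 8 < u m := hgt m (by omega) (by omega)
      have h4 : u m ≤ 7 * ε / 4 := hmid m (by omega) h2
      rw [abs_le]
      constructor <;> linarith
    rcases eq_or_lt_of_le hrb' with heq | hlt
    · rw [← heq] at hub'; linarith
    · have h5 := hA (r + 1) (w - 1) (by omega) hlt hbandmid
      have hΦ1 : (3 * ε / 2) ^ e ≤ Φ (x (w - 1)) :=
        hΦpos_ge (w - 1) (3 * ε / 2) (by linarith) hub'.le
      have hΦ2 : Φ (x (r + 1)) ≤ (11 * ε / 8) ^ e :=
        hΦpos_le (r + 1) (11 * ε / 8)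
          (by have := hgt (r + 1) (by omega) (by omega); linarith) hur1
      have h6 : ς * ((3 * ε / 2) ^ e - (11 * ε / 8) ^ e) ≤
          ς * (Φ (x (w - 1)) - Φ (x (r + 1))) :=
        mul_le_mul_of_nonneg_left (by linarith) hς.le
      linarith
  -- upcrossing through the negative band is impossible
  have lemX' : ∀ a b : ℕ, M ≤ a → a ≤ b → u a ≤ -(7 * ε / 4) → -(9 * ε / 8) ≤ u b → False := by
    intro a b hMa hab hua hub
    obtain ⟨r, har, hur, hrb, hgt⟩ : ∃ r, a ≤ r ∧ u r ≤ -(7 * ε / 4) ∧ r ≤ b ∧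
        ∀ m, r < m → m ≤ b → -(7 * ε / 4) < u m := by
      refine ⟨Nat.findGreatest (fun m => a ≤ m ∧ u m ≤ -(7 * ε / 4)) b,
        (Nat.findGreatest_spec (P := fun m => a ≤ m ∧ u m ≤ -(7 * ε / 4)) hab
          ⟨le_refl a, hua⟩).1,
        (Nat.findGreatest_spec (P := fun m => a ≤ m ∧ u m ≤ -(7 * ε / 4)) hab
          ⟨le_refl a, hua⟩).2,
        Nat.findGreatest_le b, ?_⟩
      intro m h1 h2
      by_contra h3
      exact Nat.findGreatest_is_greatest h1 h2
        ⟨le_trans (Nat.findGreatest_spec (P := fun m => a ≤ m ∧ u m ≤ -(7 * ε / 4)) hab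
          ⟨le_refl a, hua⟩).1 h1.le, by linarith⟩
    have hrltb : r < b :=
      lt_of_le_of_ne hrb (fun hrb2 => by rw [hrb2] at hur; linarith)
    have hstepr : |u (r + 1) - u r| ≤ ε / 4 :=
      hstep4 r (le_trans hMN₁ (le_trans hMa har))
    have hur1 : u (r + 1) ≤ -(3 * ε / 2) := by
      have := abs_le.mp hstepr; linarith
    have hQex : ∃ m, r < m ∧ -(9 * ε / 8) ≤ u m := ⟨b, hrltb, hub⟩
    obtain ⟨w, hQw1, hQw2, hwb, hwmin⟩ : ∃ w, r < w ∧ -(9 * ε / 8) ≤ u w ∧ w ≤ b ∧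
        ∀ m, r < m → -(9 * ε / 8) ≤ u m → w ≤ m :=
      ⟨Nat.find hQex, (Nat.find_spec hQex).1, (Nat.find_spec hQex).2,
        Nat.find_min' hQex ⟨hrltb, hub⟩, fun m h1 h2 => Nat.find_min' hQex ⟨h1, h2⟩⟩
    have hwne : r + 1 < w := by
      rcases lt_or_ge (r + 1) w with h | h
      · exact h
      · exfalso
        have hw1 : w = r + 1 := le_antisymm h hQw1
        rw [hw1] at hQw2
        linarith
    have hb'w : w - 1 + 1 = w := by omega
    have hrb' : r + 1 ≤ w - 1 := by omega
    have hb'b : w - 1 ≤ b := by omega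
    have hmid : ∀ m, r < m → m ≤ w - 1 → u m < -(9 * ε / 8) := by
      intro m h1 h2
      by_contra h3
      push_neg at h3
      have : w ≤ m := hwmin m h1 h3
      omega
    have hstepb' : |u (w - 1 + 1) - u (w - 1)| ≤ ε / 4 :=
      hstep4 (w - 1) (by have := le_trans hMN₁ (le_trans hMa har); omega)
    rw [hb'w] at hstepb'
    have hub' : -(11 * ε / 8) ≤ u (w - 1) := by
      have := abs_le.mp hstepb'
      linarith
    have hbandmid : ∀ m, r + 1 ≤ m → m ≤ w - 1 → |u m| ≤ 2 * ε := by
      intro m h1 h2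
      have h3 : -(7 * ε / 4) < u m := hgt m (by omega) (by omega)
      have h4 : u m < -(9 * ε / 8) := hmid m (by omega) h2
      rw [abs_le]
      constructor <;> linarith
    rcases eq_or_lt_of_le hrb' with heq | hlt
    · rw [← heq] at hub'; linarith
    · have h5 := hA (r + 1) (w - 1) (by omega) hlt hbandmid
      have hΦ1 : -((11 * ε / 8) ^ e) ≤ Φ (x (w - 1)) :=
        hΦneg_ge (w - 1) (11 * ε / 8)
          (by have := hmid (w - 1) (by omega) (le_refl _); linarith) hub'
      have hΦ2 : Φ (x (r + 1)) ≤ -((3 * ε / 2) ^ e) :=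
        hΦneg_le (r + 1) (3 * ε / 2) (by linarith) hur1
      have h6 : ς * ((3 * ε / 2) ^ e - (11 * ε / 8) ^ e) ≤
          ς * (Φ (x (w - 1)) - Φ (x (r + 1))) :=
        mul_le_mul_of_nonneg_left (by linarith) hς.le
      linarith
  -- eventually the sequence stays in the band
  obtain ⟨t₀, ht₀M, ht₀d⟩ := hret M
  have hut₀ : |u t₀| ≤ ε := le_trans (hretu t₀ ht₀d) hLηε
  have hbandall : ∀ k, t₀ ≤ k → |u k| ≤ 2 * ε := by
    by_contra hcon
    push_neg at hcon
    obtain ⟨s₀, hs₀1, hs₀2⟩ := hcon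
    rcases lt_abs.mp hs₀2 with h | h
    · obtain ⟨h1a, h1b⟩ := abs_le.mp hut₀
      exact lemX t₀ s₀ ht₀M hs₀1 (by linarith) (by linarith)
    · obtain ⟨t₂, ht₂s, ht₂d⟩ := hret s₀
      have h2 : |u t₂| ≤ ε := le_trans (hretu t₂ ht₂d) hLηε
      obtain ⟨h3a, h3b⟩ := abs_le.mp h2
      exact lemX' s₀ t₂ (le_trans ht₀M hs₀1) ht₂s (by linarith) (by linarith)
  -- conclusion
  refine ⟨t₀, fun k hk => ?_⟩
  rcases eq_or_lt_of_le hk with rfl | hlt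
  · calc dist (x t₀) xstar ≤ η := ht₀d
      _ < ρ := by linarith
  · obtain ⟨t', hkt', ht'd⟩ := hret k
    have htt' : t₀ < t' := lt_of_lt_of_le hlt hkt'
    have h1 := hK t₀ t' (le_trans hMK ht₀M) htt' (fun m hm1 _ => by rw [hud m]; exact hbandall m hm1)
    have hfin : (x '' Set.Icc t₀ t').Finite := (Set.finite_Icc _ _).image x
    have hd1 : dist (x k) (x t₀) ≤ Metric.diam (x '' Set.Icc t₀ t') :=
      Metric.dist_le_diam_of_mem hfin.isBounded
        ⟨k, ⟨hlt.le, hkt'⟩, rfl⟩ ⟨t₀, ⟨le_refl _, htt'.le⟩, rfl⟩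
    have hΦt₀ := hretΦ t₀ ht₀d
    have hΦt' := hretΦ t' ht'd
    have h2 : Φ (x t₀) - Φ (x t') ≤ ρ / (8 * ς) + ρ / (8 * ς) := by
      have a1 := abs_le.mp hΦt₀
      have a2 := abs_le.mp hΦt'
      linarith
    have h3 : ς * (Φ (x t₀) - Φ (x t')) ≤ ς * (ρ / (8 * ς) + ρ / (8 * ς)) :=
      mul_le_mul_of_nonneg_left h2 hς.le
    have h4 : ς * (ρ / (8 * ς) + ρ / (8 * ς)) = ρ / 4 := by
      field_simp; ring
    have h5 : ς * (Φ (x t') - Φ (x t₀)) = -(ς * (Φ (x t₀) - Φ (x t'))) := by ring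
    have h6 : δ ≤ ρ / 4 := min_le_left _ _
    have h7 := dist_triangle (x k) (x t₀) xstar
    have h8 : dist (x t₀) xstar ≤ η := ht₀d
    -- diam ≤ δ + ς * (Φ t₀ - Φ t')
    linarith
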